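/- arXiv:1102.4783 — 2 statements merged into one kernel-verified Lean document; each statement's English description precedes it below -/
import Mathlib

section
/- Let $F$ be a unimodular fan in $V = \Lambda \otimes \mathbb{R}$ with a unique maximal cone $\sigma$ of dimension $d$. Then for each $k$, the sequence $0 \to \Psi_\sigma \cdot \mathrm{P}^{k-d}(V_\sigma) \to \mathrm{PP}^k(F) \to \mathrm{PP}^k(F \setminus \{\sigma\}) \to 0$ is exact, where the second map is restriction to the boundary subfan: a piecewise polynomial on $F$ vanishing on all proper faces of $\sigma$ equals $a \cdot \Psi_\sigma$ for a unique homogeneous integer polynomial $a$ of degree $k - d$. -/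
/-- The real vector associated to the primitive integral generator of the `i`-th ray. -/
def rayR (n d : ℕ) (v : Fin d → Fin n → ℤ) (i : Fin d) : Fin n → ℝ :=
  fun t => (v i t : ℝ)

/-- The face of the unique maximal cone spanned by the rays indexed by `T`. -/
def coneOf (n d : ℕ) (v : Fin d → Fin n → ℤ) (T : Finset (Fin d)) : Set (Fin n → ℝ) :=
  {x | ∃ a : Fin d → ℝ, (∀ i, 0 ≤ a i) ∧ x = ∑ i ∈ T, a i • rayR n d v i}

/-- A function is a piecewise polynomial of degree `k` on the fan of faces of the
unique maximal cone: on each face it is given by a homogeneous integer polynomial. -/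
def IsPP (n d k : ℕ) (v : Fin d → Fin n → ℤ) (Dom : Set (Finset (Fin d)))
    (f : (Fin n → ℝ) → ℝ) : Prop :=
  ∀ T ∈ Dom, ∃ p : MvPolynomial (Fin n) ℤ, p.IsHomogeneous k ∧
    ∀ x ∈ coneOf n d v T, f x = MvPolynomial.aeval x p

namespace Stmt9Aux

open MvPolynomial

/-- A polynomial over ℤ whose real evaluation vanishes on the open positive orthant
evaluates to zero everywhere. -/
lemma aeval_zero_of_pos {d : ℕ} (q : MvPolynomial (Fin d) ℤ)
    (h : ∀ c : Fin d → ℝ, (∀ j, 0 < c j) → (aeval c q : ℝ) = 0) :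
    ∀ c : Fin d → ℝ, (aeval c q : ℝ) = 0 := by
  intro c
  set P1 : Polynomial ℝ := aeval (fun j => Polynomial.C (c j) + Polynomial.X) q with hP1
  have hcomp : ∀ t : ℝ, P1.eval t = aeval (fun j => c j + t) q := by
    intro t
    have := comp_aeval_apply ((Polynomial.aeval t).restrictScalars ℤ)
      (f := fun j => Polynomial.C (c j) + Polynomial.X) q
    simpa using this
  have hM : ∀ t : ℝ, (∑ j, |c j|) < t → P1.eval t = 0 := by
    intro t ht
    rw [hcomp]
    apply h
    intro j
    have h1 : |c j| ≤ ∑ j, |c j| :=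
      Finset.single_le_sum (fun i _ => abs_nonneg (c i)) (Finset.mem_univ j)
    have := neg_abs_le (c j)
    linarith
  have hP10 : P1 = 0 := by
    apply Polynomial.eq_zero_of_infinite_isRoot
    apply Set.Infinite.mono (s := Set.Ioi (∑ j, |c j|))
    · intro t ht; exact hM t ht
    · exact Set.Ioi_infinite _
  have := hcomp 0
  rw [hP10] at this
  simpa using this.symm

lemma eq_zero_of_pos {d : ℕ} (q : MvPolynomial (Fin d) ℤ)
    (h : ∀ c : Fin d → ℝ, (∀ j, 0 < c j) → (aeval c q : ℝ) = 0) : q = 0 := by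
  have h2 := aeval_zero_of_pos q h
  have hmap : map (Int.castRingHom ℝ) q = 0 := by
    apply MvPolynomial.funext
    intro c
    have := h2 c
    rw [aeval_def, eval₂_eq_eval_map] at this
    simpa using this
  exact MvPolynomial.map_injective _ Int.cast_injective (by simpa using hmap)

lemma sum_inter_eq {d : ℕ} {M : Type*} [AddCommMonoid M] (T S : Finset (Fin d)) (w : Fin d → M) :
    ∑ i ∈ T ∩ S, w i = ∑ i ∈ T, if i ∈ S then w i else 0 := by
  rw [Finset.sum_ite_mem]

lemma alt_sum_zero {d : ℕ} (S : Finset (Fin d)) (hS : S ≠ Finset.univ) (G : Finset (Fin d) → ℝ) :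
    ∑ T : Finset (Fin d), (-1:ℝ)^T.card * G (T ∩ S) = 0 := by
  obtain ⟨j, hj⟩ : ∃ j, j ∉ S := by
    by_contra h; push_neg at h; exact hS (Finset.eq_univ_iff_forall.2 h)
  apply Finset.sum_ninvolution (fun T => if j ∈ T then T.erase j else insert j T)
  · intro T
    by_cases hjT : j ∈ T
    · simp only [hjT, if_true]
      have h1 : (T.erase j) ∩ S = T ∩ S := by
        rw [Finset.erase_inter, Finset.erase_eq_of_notMem (by simp [hj])]
      have h2 : (T.erase j).card + 1 = T.card := Finset.card_erase_add_one hjT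
      rw [h1, ← h2, pow_succ]
      ring
    · simp only [hjT, if_false]
      have h1 : (insert j T) ∩ S = T ∩ S := Finset.insert_inter_of_notMem hj
      have h2 : (insert j T).card = T.card + 1 := Finset.card_insert_of_notMem hjT
      rw [h1, h2, pow_succ]
      ring
  · intro T _
    by_cases hjT : j ∈ T
    · simp only [hjT, if_true]
      intro h
      exact (Finset.notMem_erase j T) (h.symm ▸ hjT)
    · simp only [hjT, if_false]
      intro h
      exact hjT (h ▸ Finset.mem_insert_self j T)
  · intro T; exact Finset.mem_univ _
  · intro T
    by_cases hjT : j ∈ T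
    · simp only [hjT, if_true, Finset.notMem_erase, if_false]
      exact Finset.insert_erase hjT
    · simp only [hjT, if_false, Finset.mem_insert_self, if_true]
      exact Finset.erase_insert hjT

lemma degree_eq {d : ℕ} (f : Fin d →₀ ℕ) : f.degree = ∑ j, f j := by
  rw [Finsupp.degree]
  apply Finset.sum_subset (Finset.subset_univ _)
  intro i _ hi
  simpa [Finsupp.mem_support_iff] using hi

lemma prod_monomial_one {d n : ℕ} (s : Finset (Fin d)) (u : Fin d → (Fin n →₀ ℕ)) :
    ∏ i ∈ s, (monomial (u i) (1:ℤ)) = monomial (∑ i ∈ s, u i) 1 := by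
  classical
  induction s using Finset.induction with
  | empty => simp [monomial_zero', C_1]
  | insert _ _ hni ih =>
    rw [Finset.prod_insert hni, Finset.sum_insert hni, ih, monomial_mul, one_mul]

lemma oneF_apply {d : ℕ} (j : Fin d) : (∑ i, Finsupp.single i (1:ℕ)) j = 1 := by
  rw [Finset.sum_apply']
  simp [Finsupp.single_apply]

lemma support_coeff_pos {d : ℕ} (q : MvPolynomial (Fin d) ℤ)
    (h0 : ∀ i, aeval (Function.update (X : Fin d → MvPolynomial (Fin d) ℤ) i 0) q = 0) :
    ∀ m ∈ q.support, ∀ i, 1 ≤ m i := by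
  intro m hm i
  by_contra hlt
  have hmi : m i = 0 := by omega
  have hrep : aeval (Function.update (X : Fin d → MvPolynomial (Fin d) ℤ) i 0) q
      = ∑ m' ∈ q.support, if m' i = 0 then monomial m' (coeff m' q) else 0 := by
    conv_lhs => rw [← q.support_sum_monomial_coeff]
    rw [map_sum]
    apply Finset.sum_congr rfl
    intro m' _
    rw [aeval_monomial]
    by_cases h : m' i = 0
    · rw [if_pos h, monomial_eq]
      congr 1
      apply Finsupp.prod_congr
      intro j hj
      rw [Function.update_of_ne]
      rintro rfl
      exact (Finsupp.mem_support_iff.1 hj) h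
    · rw [if_neg h]
      have hi : i ∈ m'.support := Finsupp.mem_support_iff.2 h
      rw [Finsupp.prod, Finset.prod_eq_zero hi (by simp [Function.update_self, zero_pow h]),
        mul_zero]
  have hc : coeff m q = 0 := by
    have h1 : coeff m (aeval (Function.update (X : Fin d → MvPolynomial (Fin d) ℤ) i 0) q)
        = coeff m q := by
      rw [hrep, coeff_sum]
      rw [Finset.sum_eq_single m]
      · simp [hmi]
      · intro m' _ hne
        by_cases h : m' i = 0
        · simp [h, coeff_monomial, hne]
        · simp [h]
      · intro h; exact absurd hm h
    rw [h0 i] at h1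
    simpa using h1.symm
  exact (mem_support_iff.1 hm) hc

lemma factor {d k : ℕ} (q : MvPolynomial (Fin d) ℤ) (hq : q.IsHomogeneous k)
    (h0 : ∀ i, aeval (Function.update (X : Fin d → MvPolynomial (Fin d) ℤ) i 0) q = 0) :
    ∃ r : MvPolynomial (Fin d) ℤ, r.IsHomogeneous (k - d) ∧
      q = monomial (∑ i, Finsupp.single i 1) 1 * r := by
  classical
  have hpos := support_coeff_pos q h0
  set oneF : Fin d →₀ ℕ := ∑ i, Finsupp.single i 1 with honeF
  have hle : ∀ m ∈ q.support, oneF ≤ m := by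
    intro m hm
    rw [Finsupp.le_def]
    intro j
    rw [honeF, oneF_apply]
    exact hpos m hm j
  refine ⟨∑ m ∈ q.support, monomial (m - oneF) (coeff m q), ?_, ?_⟩
  · apply MvPolynomial.IsHomogeneous.sum
    intro m hm
    apply isHomogeneous_monomial
    have hdeg : m.degree = k := by
      rw [Finsupp.degree_eq_weight_one]
      exact hq (mem_support_iff.1 hm)
    rw [degree_eq] at hdeg ⊢
    have h1 : ∀ j, (m - oneF) j = m j - 1 := by
      intro j
      rw [Finsupp.tsub_apply, honeF, oneF_apply]
    simp_rw [h1]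
    have h2 : ∑ j : Fin d, (m j - 1) + ∑ j : Fin d, 1 = ∑ j : Fin d, m j := by
      rw [← Finset.sum_add_distrib]
      apply Finset.sum_congr rfl
      intro j _
      have := hpos m hm j
      omega
    have h3 : ∑ j : Fin d, (1:ℕ) = d := by simp
    omega
  · rw [Finset.mul_sum]
    conv_lhs => rw [← q.support_sum_monomial_coeff]
    apply Finset.sum_congr rfl
    intro m hm
    rw [monomial_mul, one_mul, add_tsub_cancel_of_le (hle m hm)]

end Stmt9Aux

open MvPolynomial Stmt9Aux in
/-- Exactness of `0 → Ψ_σ·P^{k-d}(V_σ) → PP^k(F) → PP^k(F∖{σ}) → 0` for a unimodular fan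
`F` with unique maximal cone `σ`: the restriction map is surjective, and a piecewise
polynomial vanishing on all proper faces of `σ` is `a·Ψ_σ` for a unique homogeneous
integer polynomial `a` of degree `k - d`. -/
theorem stmt9 (n d k : ℕ) (v : Fin d → Fin n → ℤ)
    (hUni : ∃ (b : Module.Basis (Fin n) ℤ (Fin n → ℤ)) (g : Fin d → Fin n),
      Function.Injective g ∧ ∀ i, b (g i) = v i)
    (Ψ : Fin d → (Fin n → ℝ) →ₗ[ℝ] ℝ)
    (hΨval : ∀ i j : Fin d, Ψ i (rayR n d v j) = if i = j then 1 else 0) :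
    -- surjectivity of the restriction to the boundary subfan
    (∀ g : (Fin n → ℝ) → ℝ,
      IsPP n d k v {T | T ≠ Finset.univ} g →
      ∃ f : (Fin n → ℝ) → ℝ, IsPP n d k v Set.univ f ∧
        ∀ T : Finset (Fin d), T ≠ Finset.univ → ∀ x ∈ coneOf n d v T, f x = g x) ∧
    -- a piecewise polynomial vanishing on the proper faces is `a·Ψ_σ` …
    (∀ f : (Fin n → ℝ) → ℝ, IsPP n d k v Set.univ f →
      (∀ T : Finset (Fin d), T ≠ Finset.univ → ∀ x ∈ coneOf n d v T, f x = 0) →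
      ∃ a : MvPolynomial (Fin n) ℤ, a.IsHomogeneous (k - d) ∧
        ∀ x ∈ coneOf n d v Finset.univ,
          f x = MvPolynomial.aeval x a * ∏ i : Fin d, Ψ i x) ∧
    -- … for a unique such polynomial (unique as a function on the maximal cone)
    (∀ f : (Fin n → ℝ) → ℝ, ∀ a a' : MvPolynomial (Fin n) ℤ,
      a.IsHomogeneous (k - d) → a'.IsHomogeneous (k - d) →
      (∀ x ∈ coneOf n d v Finset.univ,
        f x = MvPolynomial.aeval x a * ∏ i : Fin d, Ψ i x) →
      (∀ x ∈ coneOf n d v Finset.univ,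
        f x = MvPolynomial.aeval x a' * ∏ i : Fin d, Ψ i x) →
      ∀ x ∈ coneOf n d v Finset.univ,
        MvPolynomial.aeval x a = (MvPolynomial.aeval x a' : ℝ)) := by
  classical
  obtain ⟨b, gι, hginj, hbg⟩ := hUni
  -- the integer coordinates of the dual basis elements
  set cInt : Fin d → Fin n → ℤ := fun i s => b.repr (Pi.single s 1) (gι i) with hcInt
  -- the linear forms dual to the rays
  set L : Fin d → MvPolynomial (Fin n) ℤ := fun i => ∑ s, C (cInt i s) * X s with hL
  have hLhom : ∀ i, (L i).IsHomogeneous 1 := fun i =>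
    IsHomogeneous.sum _ _ _ fun s _ => isHomogeneous_C_mul_X _ _
  have hcv : ∀ i j, (∑ s, cInt i s * v j s) = if i = j then 1 else 0 := by
    intro i j
    have h1 : ∑ s, (v j s) • Pi.single s (1:ℤ) = v j := by
      simp_rw [← Pi.single_smul, smul_eq_mul, mul_one]
      exact Finset.univ_sum_single (v j)
    have h2 : b.repr (v j) (gι i) = ∑ s, (v j s) * cInt i s := by
      conv_lhs => rw [← h1]
      rw [map_sum, Finset.sum_apply']
      apply Finset.sum_congr rfl
      intro s _
      rw [map_smul, Finsupp.smul_apply, smul_eq_mul]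
    have h3 : b.repr (v j) (gι i) = if i = j then 1 else 0 := by
      rw [← hbg j, b.repr_self, Finsupp.single_apply]
      by_cases h : i = j
      · simp [h]
      · rw [if_neg, if_neg h]
        intro hgg
        exact h (hginj hgg).symm
    rw [← h3, h2]
    apply Finset.sum_congr rfl
    intro s _
    ring
  -- evaluation of the dual linear forms on points of the cones
  have hLval : ∀ (S : Finset (Fin d)) (a : Fin d → ℝ) (i : Fin d),
      (aeval (∑ j ∈ S, a j • rayR n d v j) (L i) : ℝ) = if i ∈ S then a i else 0 := by
    intro S a i
    have h1 : (aeval (∑ j ∈ S, a j • rayR n d v j) (L i) : ℝ)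
        = ∑ s, (cInt i s : ℝ) * (∑ j ∈ S, a j * (v j s : ℝ)) := by
      simp [hL, rayR, Finset.sum_apply, mul_comm]
    rw [h1]
    have h1b : ∀ s : Fin n, (cInt i s : ℝ) * (∑ j ∈ S, a j * (v j s:ℝ))
        = ∑ j ∈ S, (cInt i s:ℝ) * (a j * (v j s:ℝ)) := fun s => Finset.mul_sum _ _ _
    rw [Finset.sum_congr rfl (fun s _ => h1b s), Finset.sum_comm]
    have h2 : ∀ j ∈ S, ∑ s, (cInt i s : ℝ) * (a j * (v j s:ℝ))
        = a j * ((if i = j then 1 else 0 : ℤ) : ℝ) := by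
      intro j _
      rw [← hcv i j]
      push_cast
      rw [Finset.mul_sum]
      apply Finset.sum_congr rfl
      intro s _
      ring
    rw [Finset.sum_congr rfl h2]
    simp_rw [apply_ite (fun z : ℤ => (z : ℝ)), Int.cast_one, Int.cast_zero, mul_ite, mul_one,
      mul_zero]
    rw [Finset.sum_ite_eq]
  -- the substitution sending the ambient variables to ray coordinates
  set substV : Fin n → MvPolynomial (Fin d) ℤ := fun t => ∑ i, C (v i t) * X i with hsubstV
  have hsubstVhom : ∀ t, (substV t).IsHomogeneous 1 := fun t =>
    IsHomogeneous.sum _ _ _ fun i _ => isHomogeneous_C_mul_X _ _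
  have hEval : ∀ (p : MvPolynomial (Fin n) ℤ) (c : Fin d → ℝ),
      (aeval c (aeval substV p) : ℝ) = aeval (∑ i, c i • rayR n d v i) p := by
    intro p c
    rw [comp_aeval_apply]
    have hfn : (fun t => (aeval c (substV t) : ℝ)) = ∑ i, c i • rayR n d v i := by
      funext t
      simp [hsubstV, rayR, Finset.sum_apply, mul_comm]
    rw [hfn]
  -- the values of Ψ on the maximal cone
  have hΨc : ∀ (c : Fin d → ℝ) (i : Fin d), Ψ i (∑ j, c j • rayR n d v j) = c i := by
    intro c i
    rw [map_sum]
    simp_rw [map_smul, hΨval, smul_eq_mul, mul_ite, mul_one, mul_zero]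
    rw [Finset.sum_ite_eq]
    simp
  refine ⟨?_, ?_, ?_⟩
  · -- surjectivity
    intro g hg
    choose p php hpv using hg
    set Q : Finset (Fin d) → MvPolynomial (Fin n) ℤ := fun T =>
      if h : T = Finset.univ then 0
      else aeval (fun t => ∑ i ∈ T, C (v i t) * L i) (p T h) with hQ
    have hQhom : ∀ T, (Q T).IsHomogeneous k := by
      intro T
      by_cases h : T = Finset.univ
      · simp only [hQ, dif_pos h]
        exact isHomogeneous_zero _ _ _
      · simp only [hQ, dif_neg h]
        have := (php T h).aeval (fun t => ∑ i ∈ T, C (v i t) * L i)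
          (fun t => IsHomogeneous.sum _ _ _ fun i _ => (hLhom i).C_mul _)
        simpa using this
    set P : MvPolynomial (Fin n) ℤ :=
      (-1:ℤ)^(d-1) • ∑ T : Finset (Fin d), (-1:ℤ)^T.card • Q T with hP
    have hPhom : P.IsHomogeneous k := by
      rw [← mem_homogeneousSubmodule]
      apply Submodule.smul_mem
      apply Submodule.sum_mem
      intro T _
      exact Submodule.smul_mem _ _ (hQhom T)
    refine ⟨fun x => aeval x P, fun T _ => ⟨P, hPhom, fun x _ => rfl⟩, ?_⟩
    intro S hS x hx
    obtain ⟨a, ha, rfl⟩ := hx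
    set x := ∑ i ∈ S, a i • rayR n d v i with hxdef
    set G : Finset (Fin d) → ℝ := fun R => g (∑ i ∈ R, a i • rayR n d v i) with hG
    have claim1 : ∀ U : Finset (Fin d), U ≠ Finset.univ →
        (aeval x (Q U) : ℝ) = G (U ∩ S) := by
      intro U hU
      simp only [hQ, dif_neg hU]
      rw [comp_aeval_apply]
      have hfun : (fun t => (aeval x (∑ i ∈ U, C (v i t) * L i) : ℝ))
          = ∑ i ∈ U ∩ S, a i • rayR n d v i := by
        funext t
        have h1 : (aeval x (∑ i ∈ U, C (v i t) * L i) : ℝ)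
            = ∑ i ∈ U, (v i t : ℝ) * (if i ∈ S then a i else 0) := by
          simp [hxdef, hLval S a]
        rw [h1, Finset.sum_apply]
        rw [sum_inter_eq U S (fun i => (a i • rayR n d v i) t)]
        apply Finset.sum_congr rfl
        intro i _
        by_cases h : i ∈ S <;> simp [h, rayR, mul_comm]
      rw [hfun]
      have hmem : (∑ i ∈ U ∩ S, a i • rayR n d v i) ∈ coneOf n d v U := by
        refine ⟨fun i => if i ∈ S then a i else 0, ?_, ?_⟩
        · intro i
          by_cases h : i ∈ S <;> simp [h, ha i]
        · rw [sum_inter_eq U S (fun i => a i • rayR n d v i)]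
          apply Finset.sum_congr rfl
          intro i _
          by_cases h : i ∈ S <;> simp [h]
      exact (hpv U hU _ hmem).symm
    have hxP : (aeval x P : ℝ)
        = (-1:ℝ)^(d-1) * ∑ T : Finset (Fin d), (-1:ℝ)^T.card * (aeval x (Q T) : ℝ) := by
      rw [hP, map_zsmul, map_sum]
      simp_rw [map_zsmul, zsmul_eq_mul]
      push_cast
      ring
    have hterm : ∀ T : Finset (Fin d), (-1:ℝ)^T.card * (aeval x (Q T) : ℝ)
        = (-1:ℝ)^T.card * G (T ∩ S)
          - (if T = Finset.univ then (-1:ℝ)^d * G S else 0) := by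
      intro T
      by_cases h : T = Finset.univ
      · subst h
        simp only [hQ, dif_pos rfl, map_zero, mul_zero, if_true]
        rw [Finset.univ_inter, Finset.card_univ, Fintype.card_fin]
        ring
      · rw [claim1 T h, if_neg h, sub_zero]
    have hsum : ∑ T : Finset (Fin d), (-1:ℝ)^T.card * (aeval x (Q T) : ℝ)
        = -((-1:ℝ)^d * G S) := by
      rw [Finset.sum_congr rfl (fun T _ => hterm T), Finset.sum_sub_distrib,
        alt_sum_zero S hS G, Finset.sum_ite_eq' Finset.univ Finset.univ
          (fun _ => (-1:ℝ)^d * G S)]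
      simp
    have hd : 0 < d := by
      rcases Nat.eq_zero_or_pos d with h | h
      · exfalso
        apply hS
        apply Finset.eq_univ_iff_forall.2
        intro j
        exact absurd j.2 (by omega)
      · exact h
    obtain ⟨e, rfl⟩ : ∃ e, d = e + 1 := ⟨d - 1, by omega⟩
    show (aeval x P : ℝ) = g x
    rw [hxP, hsum]
    have hGS : G S = g x := by rw [hG]
    rw [hGS]
    have hpow : ((-1:ℝ)^e) * ((-1:ℝ)^e) = 1 := by
      rw [← pow_add]
      exact Even.neg_one_pow ⟨e, rfl⟩
    have h5 : (e + 1 - 1) = e := by omega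
    rw [h5, pow_succ]
    linear_combination (g x) * hpow
  · -- a PP vanishing on the boundary is a·Ψ
    intro f hPP hvan
    obtain ⟨p, php, hpv⟩ := hPP Finset.univ (Set.mem_univ _)
    set q : MvPolynomial (Fin d) ℤ := aeval substV p with hq
    have hqhom : q.IsHomogeneous k := by
      have := php.aeval substV hsubstVhom
      simpa [hq] using this
    have hq0 : ∀ i, aeval (Function.update (X : Fin d → MvPolynomial (Fin d) ℤ) i 0) q = 0 := by
      intro i
      apply eq_zero_of_pos
      intro c hc
      have hcomp : (aeval c (aeval (Function.update (X : Fin d → MvPolynomial (Fin d) ℤ) i 0) q) : ℝ)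
          = aeval (Function.update c i 0) q := by
        rw [comp_aeval_apply]
        have hfn : (fun j => (aeval c (Function.update (X : Fin d → MvPolynomial (Fin d) ℤ) i 0 j) : ℝ))
            = Function.update c i 0 := by
          funext j
          by_cases h : j = i
          · subst h; simp [Function.update_self]
          · simp [Function.update_of_ne h]
        rw [hfn]
      rw [hcomp, hEval]
      set c' := Function.update c i 0 with hc'
      have hc'0 : ∀ j, 0 ≤ c' j := by
        intro j
        by_cases h : j = i
        · subst h; simp [hc', Function.update_self]
        · simp only [hc', Function.update_of_ne h]
          exact (hc j).le
      have hx1 : (∑ j, c' j • rayR n d v j) ∈ coneOf n d v Finset.univ :=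
        ⟨c', hc'0, rfl⟩
      have hx2 : (∑ j, c' j • rayR n d v j) ∈ coneOf n d v (Finset.univ.erase i) := by
        refine ⟨c', hc'0, ?_⟩
        rw [← Finset.add_sum_erase Finset.univ _ (Finset.mem_univ i)]
        have : c' i = 0 := by simp [hc', Function.update_self]
        rw [this, zero_smul, zero_add]
      have herase : (Finset.univ.erase i) ≠ Finset.univ := by
        intro h
        exact (Finset.notMem_erase i Finset.univ) (h.symm ▸ Finset.mem_univ i)
      rw [← hpv _ hx1]
      exact hvan _ herase _ hx2
    obtain ⟨r, hrhom, hfac⟩ := factor q hqhom hq0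
    refine ⟨aeval L r, by simpa using hrhom.aeval L hLhom, ?_⟩
    intro x hx
    obtain ⟨c, hc, rfl⟩ := hx
    have h1 : f (∑ i, c i • rayR n d v i) = aeval c q := by
      rw [hpv _ ⟨c, hc, rfl⟩, hEval]
    have h2 : (aeval c q : ℝ) = (∏ j, c j) * aeval c r := by
      rw [hfac, map_mul, aeval_monomial]
      congr 1
      have hsupp : (∑ i : Fin d, Finsupp.single i (1:ℕ)).support = Finset.univ := by
        apply Finset.eq_univ_iff_forall.2
        intro j
        rw [Finsupp.mem_support_iff, oneF_apply]
        exact one_ne_zero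
      rw [Finsupp.prod, hsupp]
      simp only [map_one, one_mul]
      apply Finset.prod_congr rfl
      intro j _
      rw [oneF_apply, pow_one]
    have h3 : (aeval (∑ i, c i • rayR n d v i) (aeval L r) : ℝ) = aeval c r := by
      rw [comp_aeval_apply]
      have hfn : (fun i => (aeval (∑ i, c i • rayR n d v i) (L i) : ℝ)) = c := by
        funext i
        rw [hLval Finset.univ c i]
        simp
      rw [hfn]
    have h4 : (∏ i, Ψ i (∑ j, c j • rayR n d v j)) = ∏ i, c i := by
      apply Finset.prod_congr rfl
      intro i _
      exact hΨc c i
    rw [h1, h2, h3, h4]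
    ring
  · -- uniqueness
    intro f a a' ha ha' h1 h2 x hx
    have key : ∀ c : Fin d → ℝ, (∀ j, 0 < c j) →
        (aeval c (aeval substV (a - a')) : ℝ) = 0 := by
      intro c hc
      rw [map_sub, map_sub, hEval, hEval]
      have hmem : (∑ i, c i • rayR n d v i) ∈ coneOf n d v Finset.univ :=
        ⟨c, fun i => (hc i).le, rfl⟩
      have hΨpos : (∏ i, Ψ i (∑ j, c j • rayR n d v j)) = ∏ i, c i := by
        apply Finset.prod_congr rfl
        intro i _
        exact hΨc c i
      have hne : (∏ i, Ψ i (∑ j, c j • rayR n d v j)) ≠ 0 := by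
        rw [hΨpos]
        exact ne_of_gt (Finset.prod_pos (fun i _ => hc i))
      have := (h1 _ hmem).symm.trans (h2 _ hmem)
      have heq := mul_right_cancel₀ hne this
      rw [heq]
      ring
    have hz : aeval substV (a - a') = 0 := eq_zero_of_pos _ key
    obtain ⟨c, hc, rfl⟩ := hx
    have := hEval (a - a') c
    rw [hz] at this
    simp only [map_zero, map_sub] at this
    linarith [this.symm]
end

section
/- Let $M$ be a loopfree matroid on ground set $E=\{1,\ldots,n\}$ and let $F$ be a flat of $M$ of rank $i \ge 2$. Fix a flat $F_{i-2} \subsetneq F$ of rank $i-2$. If $\varphi$ is a real-valued function on flats such that for every such pair the relation $\sum_{G \text{ flat},\, F_{i-2}\subsetneq G \subsetneq F}\varphi(G) - \varphi(F) - (N-1)\varphi(F_{i-2}) = 0$ holds, where $N$ is the number of flats $G$ with $F_{i-2}\subsetneq G\subsetneq F$, and $\varphi(\emptyset)=0$, then $\varphi(F) = \sum_{a \in F}\varphi(\mathrm{cl}(\{a\}))$ for every flat $F$, provided every singleton $\{a\}$ is a flat (in which case $\varphi(F) = \sum_{a\in F}\varphi(\{a\})$). -/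
open scoped Classical

lemma stmt15_closure_flat {α : Type*} (M : Matroid α) (X : Set α) : M.IsFlat (M.closure X) := by
  rw [Matroid.closure_def]
  have hne : Nonempty {F // M.IsFlat F ∧ X ∩ M.E ⊆ F} :=
    ⟨⟨M.E, M.ground_isFlat, Set.inter_subset_right⟩⟩
  have h := Matroid.IsFlat.iInter (M := M)
    (Fs := fun F : {F // M.IsFlat F ∧ X ∩ M.E ⊆ F} => F.1) (fun F => F.2.1)
  rwa [Set.sInter_eq_iInter]

/-- The combinatorial core of the codimension-1 Poincaré duality for matroid varieties:
if a function `φ` on flats of a loopfree matroid (in which every singleton is a flat,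
and with `φ(∅) = 0`) satisfies, for every pair of flats `F' ⊊ F` of rank difference 2,
`∑_{F'⊊G⊊F} φ(G) - φ(F) - (N-1)·φ(F') = 0` (`N` the number of intermediate flats `G`),
then `φ(F) = ∑_{a∈F} φ(cl{a}) = ∑_{a∈F} φ({a})` for every flat `F`. -/
theorem stmt15 (n : ℕ) (M : Matroid (Fin n)) (hE : M.E = Set.univ)
    (hloop : ∀ a : Fin n, M.Indep {a})
    (hsingle : ∀ a : Fin n, M.IsFlat {a})
    (φ : Set (Fin n) → ℝ) (hempty : φ ∅ = 0)
    (hrel : ∀ F' F : Set (Fin n), M.IsFlat F' → M.IsFlat F → F' ⊂ F →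
      (∃ I I' : Set (Fin n), M.IsBasis I' F' ∧ M.IsBasis I F ∧ I.ncard = I'.ncard + 2) →
      (∑ G ∈ (Set.toFinite {G : Set (Fin n) | M.IsFlat G ∧ F' ⊂ G ∧ G ⊂ F}).toFinset, φ G)
        - φ F -
        (((Set.toFinite {G : Set (Fin n) | M.IsFlat G ∧ F' ⊂ G ∧ G ⊂ F}).toFinset.card : ℝ)
          - 1) * φ F' = 0) :
    ∀ F : Set (Fin n), M.IsFlat F →
      φ F = ∑ a ∈ (Set.toFinite F).toFinset, φ (M.closure {a}) ∧
      φ F = ∑ a ∈ (Set.toFinite F).toFinset, φ {a} := by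
  have hground : ∀ X : Set (Fin n), X ⊆ M.E := by
    intro X; rw [hE]; exact Set.subset_univ X
  have hcl : ∀ a : Fin n, M.closure {a} = {a} := fun a => (hsingle a).closure
  suffices h : ∀ (k : ℕ) (F : Set (Fin n)), F.ncard ≤ k → M.IsFlat F →
      φ F = ∑ a ∈ (Set.toFinite F).toFinset, φ {a} by
    intro F hF
    have h2 := h F.ncard F le_rfl hF
    refine ⟨?_, h2⟩
    rw [h2]
    exact Finset.sum_congr rfl fun a _ => by rw [hcl a]
  intro k
  induction k with
  | zero =>
    intro F hk hF
    have hFe : F = ∅ := (Set.ncard_eq_zero (Set.toFinite F)).mp (Nat.le_zero.mp hk)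
    subst hFe
    rw [hempty, Set.Finite.toFinset_empty _,
      Finset.sum_empty]
  | succ k IH =>
    intro F hk hF
    obtain ⟨I, hI⟩ := M.exists_isBasis F (hground F)
    -- all bases of F have cardinality I.ncard
    have hbcard : ∀ J, M.IsBasis J F → J.ncard = I.ncard := by
      intro J hJ
      rw [Set.ncard_def, hJ.encard_eq_encard hI, ← Set.ncard_def]
    rcases hr : I.ncard with _ | _ | m
    · -- rank 0 : F = ∅
      have hIe : I = ∅ := (Set.ncard_eq_zero (Set.toFinite I)).mp hr
      have hFe : F = ∅ := by
        by_contra hne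
        obtain ⟨a, ha⟩ := Set.nonempty_iff_ne_empty.mpr hne
        have := hI.eq_of_subset_indep (hloop a) (by simp [hIe])
          (Set.singleton_subset_iff.mpr ha)
        rw [hIe] at this
        exact Set.singleton_ne_empty a this.symm
      subst hFe
      rw [hempty, Set.Finite.toFinset_empty _,
        Finset.sum_empty]
    · -- rank 1 : F is a singleton
      obtain ⟨b, hb⟩ := Set.ncard_eq_one.mp hr
      have hFb : F = {b} := by
        apply subset_antisymm
        · have h1 := hI.subset_closure
          rwa [hb, hcl b] at h1
        · exact Set.singleton_subset_iff.mpr (hI.subset (by simp [hb]))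
      subst hFb
      rw [Set.Finite.toFinset_singleton _,
        Finset.sum_singleton]
    · -- rank ≥ 2 : the main case
      obtain ⟨I', hI'sub, hI'card⟩ := Set.exists_subset_card_eq (s := I) (n := m) (by omega)
      have hI'indep := hI.indep.subset hI'sub
      set F' := M.closure I' with hF'def
      have hF'flat : M.IsFlat F' := stmt15_closure_flat M I'
      have hI'basis : M.IsBasis I' F' := hI'indep.isBasis_closure
      have hF'F : F' ⊆ F := by
        have h1 : M.closure I' ⊆ M.closure I := M.closure_subset_closure hI'sub
        rwa [hI.closure_eq_closure, hF.closure] at h1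
      obtain ⟨e, heI, heI'⟩ : ∃ e, e ∈ I ∧ e ∉ I' := by
        by_contra hcon; push_neg at hcon
        have := Set.ncard_le_ncard hcon (Set.toFinite I')
        omega
      have he_not : e ∉ F' := by
        intro he
        have h1 : F' ⊆ M.closure (I \ {e}) := M.closure_subset_closure
          (fun x hx => ⟨hI'sub hx, fun hxe => by
            rw [Set.mem_singleton_iff] at hxe; exact heI' (hxe ▸ hx)⟩)
        exact hI.indep.notMem_closure_sdiff_of_mem heI (h1 he)
      have hssub : F' ⊂ F :=
        (Set.ssubset_iff_of_subset hF'F).mpr ⟨e, hI.subset heI, he_not⟩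
      have heq := hrel F' F hF'flat hF hssub ⟨I, I', hI'basis, hI, by omega⟩
      -- induction hypothesis applies to any flat strictly inside F
      have hIHG : ∀ G : Set (Fin n), M.IsFlat G → G ⊂ F →
          φ G = ∑ a ∈ (Set.toFinite G).toFinset, φ {a} := by
        intro G hGflat hGF
        refine IH G ?_ hGflat
        have := Set.ncard_lt_ncard hGF (Set.toFinite F)
        omega
      set Sfin := (Set.toFinite {G : Set (Fin n) | M.IsFlat G ∧ F' ⊂ G ∧ G ⊂ F}).toFinset
        with hSdef
      have hmemS : ∀ G, G ∈ Sfin ↔ M.IsFlat G ∧ F' ⊂ G ∧ G ⊂ F := by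
        intro G; rw [hSdef, Set.Finite.mem_toFinset]; rfl
      -- key existence: for a ∈ F \ F', the flat cl(insert a F') is an intermediate flat
      have hGa : ∀ a, a ∈ F → a ∉ F' →
          M.closure (insert a F') ∈ Sfin ∧ a ∈ M.closure (insert a F') := by
        intro a haF haF'
        have haI' : a ∉ I' := fun h => haF' (M.subset_closure I' (hground I') h)
        have hins_indep : M.Indep (insert a I') :=
          (hI'indep.insert_indep_iff_of_notMem haI').mpr ⟨by rw [hE]; trivial, haF'⟩
        have hGacl : M.closure (insert a F') = M.closure (insert a I') := by
          rw [hF'def, Matroid.closure_insert_closure_eq_closure_insert]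
        have hGb : M.IsBasis (insert a I') (M.closure (insert a F')) := by
          rw [hGacl]; exact hins_indep.isBasis_closure
        have haGa : a ∈ M.closure (insert a F') :=
          M.subset_closure (insert a F') (hground _) (Set.mem_insert a F')
        have hF'Ga : F' ⊆ M.closure (insert a F') := by
          rw [hGacl, hF'def]
          exact M.closure_subset_closure (Set.subset_insert a I')
        have hGaF : M.closure (insert a F') ⊆ F := by
          have h1 := M.closure_subset_closure (Set.insert_subset haF hF'F)
          rwa [hF.closure] at h1
        have hGane : M.closure (insert a F') ≠ F := by
          intro hcon
          have hbas : M.IsBasis (insert a I') F := by rwa [hcon] at hGb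
          have := hbcard _ hbas
          rw [Set.ncard_insert_of_notMem haI' (Set.toFinite I')] at this
          omega
        refine ⟨(hmemS _).mpr ⟨stmt15_closure_flat M _, ?_, ?_⟩, haGa⟩
        · exact (Set.ssubset_iff_of_subset hF'Ga).mpr ⟨a, haGa, haF'⟩
        · exact ⟨hGaF, fun hcon => hGane (subset_antisymm hGaF hcon)⟩
      -- key uniqueness: an intermediate flat containing a equals cl(insert a F')
      have huniq : ∀ G, G ∈ Sfin → ∀ a, a ∈ F → a ∉ F' → a ∈ G →
          G = M.closure (insert a F') := by
        intro G hG a haF haF' haG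
        obtain ⟨hGflat, hF'G, hGF⟩ := (hmemS G).mp hG
        have haI' : a ∉ I' := fun h => haF' (M.subset_closure I' (hground I') h)
        have hins_indep : M.Indep (insert a I') :=
          (hI'indep.insert_indep_iff_of_notMem haI').mpr ⟨by rw [hE]; trivial, haF'⟩
        have hGacl : M.closure (insert a F') = M.closure (insert a I') := by
          rw [hF'def, Matroid.closure_insert_closure_eq_closure_insert]
        have hGaG : M.closure (insert a F') ⊆ G := by
          have h1 := M.closure_subset_closure (Set.insert_subset haG hF'G.subset)
          rwa [hGflat.closure] at h1
        by_contra hne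
        obtain ⟨b, hbG, hbGa⟩ : ∃ b, b ∈ G ∧ b ∉ M.closure (insert a F') := by
          by_contra hcon; push_neg at hcon
          exact hne (subset_antisymm hcon hGaG)
        have hbmem : b ∉ insert a I' := fun h =>
          hbGa (by rw [hGacl]; exact M.subset_closure _ (hground _) h)
        have hbcl : b ∉ M.closure (insert a I') := by rwa [hGacl] at hbGa
        have hJindep : M.Indep (insert b (insert a I')) :=
          (hins_indep.insert_indep_iff_of_notMem hbmem).mpr ⟨by rw [hE]; trivial, hbcl⟩
        have hJF : insert b (insert a I') ⊆ F := by
          refine Set.insert_subset (hGF.subset hbG) (Set.insert_subset haF ?_)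
          exact fun x hx => hF'F (M.subset_closure I' (hground I') hx)
        obtain ⟨K, hK, hJK⟩ := hJindep.subset_isBasis_of_subset hJF (hground F)
        have hJcard : (insert b (insert a I')).ncard = m + 2 := by
          rw [Set.ncard_insert_of_notMem hbmem (Set.toFinite _),
            Set.ncard_insert_of_notMem haI' (Set.toFinite I')]
          omega
        have hKcard := hbcard K hK
        have hJeqK : insert b (insert a I') = K :=
          Set.eq_of_subset_of_ncard_le hJK (by omega) (Set.toFinite K)
        have hKbasis : M.IsBasis (insert b (insert a I')) F := by rwa [← hJeqK] at hK
        have hJG : insert b (insert a I') ⊆ G :=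
          Set.insert_subset hbG (Set.insert_subset haG
            (fun x hx => hF'G.subset (M.subset_closure I' (hground I') hx)))
        have hFG : F ⊆ G := by
          have h1 := hKbasis.subset_closure
          have h2 := M.closure_subset_closure hJG
          rw [hGflat.closure] at h2
          exact h1.trans h2
        exact hGF.ne (subset_antisymm hGF.subset hFG)
      -- sums
      set c' : ℝ := ∑ a ∈ (Set.toFinite F').toFinset, φ {a} with hc'
      have hF'sum : φ F' = c' := hIHG F' hF'flat hssub
      have hsubfin : ∀ G, G ∈ Sfin → (Set.toFinite F').toFinset ⊆ (Set.toFinite G).toFinset := by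
        intro G hG
        obtain ⟨_, hF'G, _⟩ := (hmemS G).mp hG
        intro x hx
        rw [Set.Finite.mem_toFinset] at hx ⊢
        exact hF'G.subset hx
      have hsubF : (Set.toFinite F').toFinset ⊆ (Set.toFinite F).toFinset := by
        intro x hx
        rw [Set.Finite.mem_toFinset] at hx ⊢
        exact hF'F hx
      have hdisj : (↑Sfin : Set (Set (Fin n))).PairwiseDisjoint
          (fun G => (Set.toFinite G).toFinset \ (Set.toFinite F').toFinset) := by
        intro G1 hG1 G2 hG2 hne12
        simp only [Finset.disjoint_left]
        intro a ha1 ha2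
        rw [Finset.mem_sdiff, Set.Finite.mem_toFinset, Set.Finite.mem_toFinset] at ha1 ha2
        have hG1' := (hmemS G1).mp (by simpa using hG1)
        have hG2' := (hmemS G2).mp (by simpa using hG2)
        have haF : a ∈ F := hG1'.2.2.subset ha1.1
        have haF' : a ∉ F' := ha1.2
        have e1 := huniq G1 (by simpa using hG1) a haF haF' ha1.1
        have e2 := huniq G2 (by simpa using hG2) a haF haF' ha2.1
        exact hne12 (e1.trans e2.symm)
      have hcover : Sfin.biUnion (fun G => (Set.toFinite G).toFinset \ (Set.toFinite F').toFinset)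
          = (Set.toFinite F).toFinset \ (Set.toFinite F').toFinset := by
        ext a
        simp only [Finset.mem_biUnion, Finset.mem_sdiff, Set.Finite.mem_toFinset]
        constructor
        · rintro ⟨G, hG, haG, haF'⟩
          exact ⟨((hmemS G).mp hG).2.2.subset haG, haF'⟩
        · rintro ⟨haF, haF'⟩
          exact ⟨M.closure (insert a F'), (hGa a haF haF').1, (hGa a haF haF').2, haF'⟩
      have hsum : ∑ G ∈ Sfin, φ G
          = (Sfin.card : ℝ) * c'
            + ∑ a ∈ (Set.toFinite F).toFinset \ (Set.toFinite F').toFinset, φ {a} := by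
        have h1 : ∀ G ∈ Sfin, φ G
            = c' + ∑ a ∈ (Set.toFinite G).toFinset \ (Set.toFinite F').toFinset, φ {a} := by
          intro G hG
          obtain ⟨hGflat, _, hGF⟩ := (hmemS G).mp hG
          rw [hIHG G hGflat hGF, ← Finset.sum_sdiff (hsubfin G hG), hc', add_comm]
        rw [Finset.sum_congr rfl h1, Finset.sum_add_distrib, Finset.sum_const,
          ← Finset.sum_biUnion hdisj, hcover, nsmul_eq_mul]
      have hFsum : ∑ a ∈ (Set.toFinite F).toFinset, φ {a}
          = c' + ∑ a ∈ (Set.toFinite F).toFinset \ (Set.toFinite F').toFinset, φ {a} := by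
        rw [← Finset.sum_sdiff hsubF, hc', add_comm]
      rw [sub_mul, one_mul, hsum, hF'sum] at heq
      rw [hFsum]
      linarith
end
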